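/- In the herald-protocol round model, let u be a vertex with Γ(u) ≥ 1, let v and w be two distinct adjacent vertices with v, w ∈ N(u) ∪ {u}, and set λ := max(1, ⌈log₂ Γ(u)⌉); assume λ ≤ n_A. Then the probability that both v and w operate on channel λ while no other vertex of N(v) ∪ N(w) operates on channel λ is at least (1/4) · 4^{−(Γ(v)+Γ(w))/Γ(u)} · γ(v) · γ(w) / Γ(u)². -/

import Mathlib

open Finset

/-- The action a vertex takes in one round: `none` is idle, `some (i, false)` is listening on
channel `i+1`, and `some (i, true)` is broadcasting on channel `i+1` (channels are numbered
`1, …, nA`). -/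
abbrev Act (nA : ℕ) := Option (Fin nA × Bool)

/-- The probability of each action in the herald-protocol round model, for a vertex with
activity `g` and listening probability `p`: on channel `i+1` the vertex listens with
probability `p·g·2^{-(i+1)}` and broadcasts with probability `(1−p)·g·2^{-(i+1)}`; with the
remaining probability it is idle. -/
noncomputable def actProb (nA : ℕ) (p g : ℝ) : Act nA → ℝ
  | some (i, false) => p * g * (2 : ℝ) ^ (-((i.1 : ℤ) + 1))
  | some (i, true) => (1 - p) * g * (2 : ℝ) ^ (-((i.1 : ℤ) + 1))
  | none => 1 - ∑ i : Fin nA, g * (2 : ℝ) ^ (-((i.1 : ℤ) + 1))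

open Classical in
/-- The probability of an event `E` in one round of the herald-protocol round model, where all
vertices choose their actions independently. -/
noncomputable def roundPr {V : Type*} [Fintype V] [DecidableEq V] (nA : ℕ) (p : ℝ)
    (γ : V → ℝ) (E : (V → Act nA) → Prop) : ℝ :=
  ∑ f : V → Act nA, if E f then ∏ v, actProb nA p (γ v) (f v) else 0

/-- `v` listens on channel `i` (i.e. channel number `i+1`). -/
def listens {V : Type*} {nA : ℕ} (f : V → Act nA) (v : V) (i : Fin nA) : Prop :=
  f v = some (i, false)

/-- `v` broadcasts on channel `i` (i.e. channel number `i+1`). -/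
def broadcasts {V : Type*} {nA : ℕ} (f : V → Act nA) (v : V) (i : Fin nA) : Prop :=
  f v = some (i, true)

/-- `v` operates (listens or broadcasts) on channel `i`. -/
def operates {V : Type*} {nA : ℕ} (f : V → Act nA) (v : V) (i : Fin nA) : Prop :=
  listens f v i ∨ broadcasts f v i

open Classical in
/-- `v` receives a message on channel `i`: it listens on channel `i` and exactly one of its
neighbors broadcasts on channel `i`. -/
def receivesOn {V : Type*} [Fintype V] [DecidableEq V] (G : SimpleGraph V)
    [DecidableRel G.Adj] {nA : ℕ} (f : V → Act nA) (v : V) (i : Fin nA) : Prop :=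
  listens f v i ∧ ((G.neighborFinset v).filter fun w => broadcasts f w i).card = 1

/-- `v` receives a message (on some channel). -/
def receives {V : Type*} [Fintype V] [DecidableEq V] (G : SimpleGraph V)
    [DecidableRel G.Adj] {nA : ℕ} (f : V → Act nA) (v : V) : Prop :=
  ∃ i : Fin nA, receivesOn G f v i

/-- `ball G u k` is the set `N^k(u)` of vertices at distance at most `k` from `u` in `G`
(including `u` itself). -/
def ball {V : Type*} (G : SimpleGraph V) (u : V) (k : ℕ) : Set V :=
  {v | ∃ p : G.Walk u v, p.length ≤ k}

/-- The independence number of the subgraph of `G` induced by a vertex set `S`. -/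
noncomputable def indepNumOn {V : Type*} [Fintype V] (G : SimpleGraph V) (S : Set V) : ℕ :=
  sSup {n | ∃ s : Finset V, ↑s ⊆ S ∧ (∀ a ∈ s, ∀ b ∈ s, a ≠ b → ¬ G.Adj a b) ∧ s.card = n}

/-- `Γ(x) = ∑_{y ∈ N(x) ∪ {x}} γ(y)`. -/
noncomputable def Gam {V : Type*} [Fintype V] [DecidableEq V] (G : SimpleGraph V)
    [DecidableRel G.Adj] (γ : V → ℝ) (x : V) : ℝ :=
  ∑ y ∈ insert x (G.neighborFinset x), γ y

/-- `Γ°(x) = ∑_{y ∈ N(x)} γ(y)`. -/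
noncomputable def GamO {V : Type*} [Fintype V] [DecidableEq V] (G : SimpleGraph V)
    [DecidableRel G.Adj] (γ : V → ℝ) (x : V) : ℝ :=
  ∑ y ∈ G.neighborFinset x, γ y

/-- In the herald-protocol round model, if `Γ(u) ≥ 1`, `v` and `w` are distinct adjacent
vertices of the closed neighborhood of `u`, and `λ = max(1, ⌈log₂ Γ(u)⌉) ≤ n_A`, then the
probability that both `v` and `w` operate on channel `λ` while no other vertex of
`N(v) ∪ N(w)` operates on channel `λ` is at least
`(1/4) · 4^{−(Γ(v)+Γ(w))/Γ(u)} · γ(v) · γ(w) / Γ(u)²`.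
(A channel index `i : Fin nA` corresponds to channel number `i + 1`.) -/
-- auxiliary lemmas

lemma aux_total (nA : ℕ) (p g : ℝ) : ∑ a : Option (Fin nA × Bool), actProb nA p g a = 1 := by
  rw [Fintype.sum_option, Fintype.sum_prod_type]
  have : ∀ i : Fin nA, ∑ b : Bool, actProb nA p g (some (i, b))
      = g * (2 : ℝ) ^ (-((i.1 : ℤ) + 1)) := by
    intro i
    rw [Fintype.sum_bool]
    show (1 - p) * g * _ + p * g * _ = _
    ring
  rw [Finset.sum_congr rfl fun i _ => this i]
  show 1 - ∑ i : Fin nA, g * (2 : ℝ) ^ (-((i.1 : ℤ) + 1)) + _ = 1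
  ring

-- convexity lemma
lemma aux_rpow (t : ℝ) (h0 : 0 ≤ t) (h1 : t ≤ 1/2) : (4:ℝ) ^ (-t) ≤ 1 - t := by
  have h4 : (4:ℝ) ^ (-t) = Real.exp (Real.log 4 * (-t)) :=
    Real.rpow_def_of_pos (by norm_num) _
  have hc := convexOn_exp.2 (Set.mem_univ (0:ℝ)) (Set.mem_univ (-Real.log 4/2))
    (show (0:ℝ) ≤ 1 - 2*t by linarith) (show (0:ℝ) ≤ 2*t by linarith)
    (show (1 - 2*t) + 2*t = 1 by ring)
  have hlog : Real.log 4 = 2 * Real.log 2 := by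
    rw [show (4:ℝ) = 2^2 by norm_num, Real.log_pow]; push_cast; ring
  have he : Real.exp (-Real.log 4/2) = 1/2 := by
    rw [hlog]
    rw [show -(2 * Real.log 2)/2 = -Real.log 2 by ring, Real.exp_neg, Real.exp_log] <;> norm_num
  simp only [smul_eq_mul, Real.exp_zero, mul_zero, zero_add] at hc
  rw [he] at hc
  calc (4:ℝ) ^ (-t) = Real.exp (2*t * (-Real.log 4/2)) := by
        rw [h4]; congr 1; ring
    _ ≤ (1-2*t) * 1 + 2*t * (1/2) := hc
    _ = 1 - t := by ring

open Classical in
lemma aux_sum_op (nA : ℕ) (p g : ℝ) (lam : ℕ) (h1 : 1 ≤ lam) (h2 : lam ≤ nA) :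
    ∑ a : Option (Fin nA × Bool),
      (if ∃ i : Fin nA, i.1 + 1 = lam ∧ (a = some (i, false) ∨ a = some (i, true))
       then actProb nA p g a else 0) = g * (2:ℝ) ^ (-(lam:ℤ)) := by
  have hjlt : lam - 1 < nA := by omega
  set j : Fin nA := ⟨lam - 1, hjlt⟩ with hj
  have hjval : (j.1 : ℕ) + 1 = lam := by simp [hj]; omega
  rw [Fintype.sum_option]
  have hnone : (if ∃ i : Fin nA, i.1 + 1 = lam ∧ ((none : Option (Fin nA × Bool)) = some (i, false) ∨ (none : Option (Fin nA × Bool)) = some (i, true)) then actProb nA p g none else 0) = 0 := by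
    rw [if_neg]; rintro ⟨i, -, h | h⟩ <;> simp at h
  rw [hnone, zero_add, Fintype.sum_prod_type]
  have key : ∀ x : Fin nA,
      (∑ y : Bool, if ∃ i : Fin nA, i.1 + 1 = lam ∧
          ((some (x, y) : Option (Fin nA × Bool)) = some (i, false) ∨
           (some (x, y) : Option (Fin nA × Bool)) = some (i, true))
        then actProb nA p g (some (x, y)) else 0)
      = if x = j then g * (2:ℝ) ^ (-(lam:ℤ)) else 0 := by
    intro x
    by_cases hx : x = j
    · subst hx
      rw [if_pos rfl, Fintype.sum_bool, if_pos ⟨j, hjval, Or.inr rfl⟩,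
        if_pos ⟨j, hjval, Or.inl rfl⟩]
      show (1 - p) * g * (2:ℝ) ^ (-((j.1 : ℤ) + 1)) + p * g * (2:ℝ) ^ (-((j.1 : ℤ) + 1)) = _
      have : -((j.1 : ℤ) + 1) = -(lam : ℤ) := by
        have := hjval; omega
      rw [this]; ring
    · have hne : x.1 + 1 ≠ lam := by
        intro h; apply hx; apply Fin.ext; simp [hj]; omega
      rw [if_neg hx, Fintype.sum_bool, if_neg, if_neg, add_zero]
      · rintro ⟨i, hi, h | h⟩ <;> (simp only [Option.some_inj, Prod.mk.injEq] at h) <;>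
          exact hne (h.1 ▸ hi)
      · rintro ⟨i, hi, h | h⟩ <;> (simp only [Option.some_inj, Prod.mk.injEq] at h) <;>
          exact hne (h.1 ▸ hi)
  rw [Finset.sum_congr rfl fun x _ => key x, Finset.sum_ite_eq' univ j, if_pos (mem_univ j)]

open Classical in
lemma aux_sum_notop (nA : ℕ) (p g : ℝ) (lam : ℕ) (h1 : 1 ≤ lam) (h2 : lam ≤ nA) :
    ∑ a : Option (Fin nA × Bool),
      (if ¬ ∃ i : Fin nA, i.1 + 1 = lam ∧ (a = some (i, false) ∨ a = some (i, true))
       then actProb nA p g a else 0) = 1 - g * (2:ℝ) ^ (-(lam:ℤ)) := by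
  have h := aux_sum_op nA p g lam h1 h2
  have htot := aux_total nA p g
  open Classical in
  have hsplit : ∑ a : Option (Fin nA × Bool),
      ((if ∃ i : Fin nA, i.1 + 1 = lam ∧ (a = some (i, false) ∨ a = some (i, true))
        then actProb nA p g a else 0) +
       (if ¬ ∃ i : Fin nA, i.1 + 1 = lam ∧ (a = some (i, false) ∨ a = some (i, true))
        then actProb nA p g a else 0)) = 1 := by
    rw [← htot]
    refine Finset.sum_congr rfl fun a _ => ?_
    by_cases hP : ∃ i : Fin nA, i.1 + 1 = lam ∧ (a = some (i, false) ∨ a = some (i, true)) <;>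
      simp [hP]
  rw [Finset.sum_add_distrib, h] at hsplit
  linarith

open Classical in
lemma aux_factor {V : Type*} [Fintype V] [DecidableEq V] (nA : ℕ) (p : ℝ) (γ : V → ℝ)
    (S : V → Option (Fin nA × Bool) → Prop) [inst : ∀ x a, Decidable (S x a)] :
    (∑ f : V → Option (Fin nA × Bool),
        if (∀ x, S x (f x)) then ∏ x, actProb nA p (γ x) (f x) else 0)
    = ∏ x, ∑ a : Option (Fin nA × Bool), if S x a then actProb nA p (γ x) a else 0 := by
  rw [Finset.prod_univ_sum, Fintype.piFinset_univ]
  refine Finset.sum_congr rfl fun f _ => ?_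
  by_cases hf : ∀ x, S x (f x)
  · rw [if_pos hf]
    exact Finset.prod_congr rfl fun x _ => (if_pos (hf x)).symm
  · rw [if_neg hf]
    push_neg at hf
    obtain ⟨x, hx⟩ := hf
    exact (Finset.prod_eq_zero (mem_univ x) (if_neg hx : _ = (0:ℝ))).symm

open Classical in
lemma aux_factor' {V : Type*} [Fintype V] [DecidableEq V] (nA : ℕ) (p : ℝ) (γ : V → ℝ)
    (E : (V → Act nA) → Prop) (S : V → Option (Fin nA × Bool) → Prop)
    [inst : ∀ x a, Decidable (S x a)] (hE : ∀ f, E f ↔ ∀ x, S x (f x)) :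
    roundPr nA p γ E
      = ∏ x, ∑ a : Option (Fin nA × Bool), if S x a then actProb nA p (γ x) a else 0 := by
  calc roundPr nA p γ E
      = ∑ f : V → Act nA,
          if (∀ x, S x (f x)) then ∏ x, actProb nA p (γ x) (f x) else 0 :=
        Finset.sum_congr rfl fun f _ => if_congr (hE f) rfl rfl
    _ = _ := aux_factor nA p γ S

theorem stmt_18 {V : Type*} [Fintype V] [DecidableEq V] (G : SimpleGraph V)
    [DecidableRel G.Adj] (nA : ℕ) (hnA : 1 ≤ nA)
    (pl : ℝ) (hpl0 : 0 < pl) (hpl1 : pl ≤ 1 / 2)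
    (γ : V → ℝ) (hγ : ∀ x, 0 ≤ γ x ∧ γ x ≤ 1 / 2)
    (u v w : V) (hvw : v ≠ w) (hadj : G.Adj v w)
    (hv : v ∈ insert u (G.neighborFinset u)) (hw : w ∈ insert u (G.neighborFinset u))
    (hΓ : 1 ≤ Gam G γ u)
    (lam : ℕ) (hlam : lam = max 1 ⌈Real.logb 2 (Gam G γ u)⌉₊) (hlamnA : lam ≤ nA) :
    1 / 4 * (4 : ℝ) ^ (-((Gam G γ v + Gam G γ w) / Gam G γ u)) * γ v * γ w /
        (Gam G γ u) ^ 2 ≤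
      roundPr nA pl γ (fun f =>
        (∃ i : Fin nA, (i.1 : ℕ) + 1 = lam ∧ operates f v i) ∧
        (∃ i : Fin nA, (i.1 : ℕ) + 1 = lam ∧ operates f w i) ∧
        (∀ x ∈ G.neighborFinset v ∪ G.neighborFinset w, x ≠ v → x ≠ w →
          ∀ i : Fin nA, (i.1 : ℕ) + 1 = lam → ¬ operates f x i)) := by
  have hγv0 := (hγ v).1
  have hγw0 := (hγ w).1
  have hΓu0 : (0:ℝ) < Gam G γ u := lt_of_lt_of_le one_pos hΓ
  have hlam1 : 1 ≤ lam := by rw [hlam]; exact le_max_left _ _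
  set Γu := Gam G γ u with hΓudef
  set A : ℝ := (2:ℝ) ^ (-(lam:ℤ)) with hAdef
  have hpow_eq : ((2:ℝ) ^ (lam:ℝ)) = (2:ℝ)^lam := Real.rpow_natCast 2 lam
  have hΓu_le : Γu ≤ (2:ℝ)^lam := by
    have hlog : Real.logb 2 Γu ≤ (lam:ℝ) := by
      have h1 : Real.logb 2 Γu ≤ (⌈Real.logb 2 Γu⌉₊ : ℝ) := Nat.le_ceil _
      have h2 : ((⌈Real.logb 2 Γu⌉₊ : ℕ) : ℝ) ≤ (lam:ℝ) := by
        exact_mod_cast (hlam ▸ le_max_right 1 _)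
      linarith
    have := (Real.logb_le_iff_le_rpow (by norm_num) hΓu0).1 hlog
    rwa [hpow_eq] at this
  have hpow_le : (2:ℝ)^lam ≤ 2 * Γu := by
    rcases le_or_gt ⌈Real.logb 2 Γu⌉₊ 1 with h | h
    · have hl1 : lam = 1 := by rw [hlam]; omega
      rw [hl1, pow_one]; linarith
    · have hlamc : lam = ⌈Real.logb 2 Γu⌉₊ := by rw [hlam]; omega
      have hlb0 : 0 ≤ Real.logb 2 Γu := Real.logb_nonneg (by norm_num) hΓ
      have hlt : (lam : ℝ) < Real.logb 2 Γu + 1 := by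
        rw [hlamc]; exact_mod_cast Nat.ceil_lt_add_one hlb0
      have hle : (2:ℝ)^((lam:ℕ):ℝ) ≤ (2:ℝ)^(Real.logb 2 Γu + 1) :=
        Real.rpow_le_rpow_of_exponent_le (by norm_num) (le_of_lt hlt)
      rw [hpow_eq] at hle
      calc (2:ℝ)^lam ≤ (2:ℝ)^(Real.logb 2 Γu + 1) := hle
        _ = 2 * Γu := by
            rw [Real.rpow_add (by norm_num), Real.rpow_one,
              Real.rpow_logb (by norm_num) (by norm_num) hΓu0]
            ring
  have hA_eq : A = ((2:ℝ)^lam)⁻¹ := by rw [hAdef, zpow_neg, zpow_natCast]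
  have hpowpos : (0:ℝ) < 2^lam := by positivity
  have hA0 : (0:ℝ) < A := by rw [hA_eq]; positivity
  have hA_le : A ≤ 1/Γu := by
    rw [hA_eq, one_div]; exact inv_anti₀ hΓu0 hΓu_le
  have hA_ge : 1/(2*Γu) ≤ A := by
    rw [hA_eq, one_div]; exact inv_anti₀ hpowpos hpow_le
  have hA_half : A ≤ 1/2 := by
    rw [hA_eq, one_div]
    apply inv_anti₀ (by norm_num)
    calc (2:ℝ) = 2^1 := (pow_one 2).symm
      _ ≤ 2^lam := pow_le_pow_right₀ (by norm_num) hlam1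
  set U : Finset V := G.neighborFinset v ∪ G.neighborFinset w with hU
  set P : Option (Fin nA × Bool) → Prop :=
    fun a => ∃ i : Fin nA, i.1 + 1 = lam ∧ (a = some (i, false) ∨ a = some (i, true)) with hPdef
  set S : V → Option (Fin nA × Bool) → Prop :=
    fun x a => if x = v then P a else if x = w then P a else if x ∈ U then ¬ P a else True
    with hSdef
  have hEiff : ∀ f : V → Act nA,
      ((∃ i : Fin nA, (i.1:ℕ)+1 = lam ∧ operates f v i) ∧
       (∃ i : Fin nA, (i.1:ℕ)+1 = lam ∧ operates f w i) ∧
       (∀ x ∈ U, x ≠ v → x ≠ w → ∀ i : Fin nA, (i.1:ℕ)+1 = lam → ¬ operates f x i))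
      ↔ ∀ x, S x (f x) := by
    intro f
    simp only [hSdef, hPdef, operates, listens, broadcasts]
    constructor
    · rintro ⟨h1, h2, h3⟩ x
      split_ifs with hxv hxw hxU
      · subst hxv; exact h1
      · subst hxw; exact h2
      · rintro ⟨i, hi, hop⟩; exact h3 x hxU hxv hxw i hi hop
      all_goals trivial
    · intro h
      refine ⟨?_, ?_, ?_⟩
      · have := h v; rwa [if_pos rfl] at this
      · have := h w; rwa [if_neg (Ne.symm hvw), if_pos rfl] at this
      · intro x hxU hxv hxw i hi hop
        have := h x
        rw [if_neg hxv, if_neg hxw, if_pos hxU] at this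
        exact this ⟨i, hi, hop⟩
  have hroundPr := aux_factor' nA pl γ (fun f =>
        (∃ i : Fin nA, (i.1 : ℕ) + 1 = lam ∧ operates f v i) ∧
        (∃ i : Fin nA, (i.1 : ℕ) + 1 = lam ∧ operates f w i) ∧
        (∀ x ∈ U, x ≠ v → x ≠ w →
          ∀ i : Fin nA, (i.1 : ℕ) + 1 = lam → ¬ operates f x i)) S hEiff
  rw [hroundPr]
  -- compute the factors
  open Classical in
  have hFv : (∑ a : Act nA, if S v a then actProb nA pl (γ v) a else 0) = γ v * A := by
    calc (∑ a : Act nA, if S v a then actProb nA pl (γ v) a else 0)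
        = ∑ a : Act nA, if P a then actProb nA pl (γ v) a else 0 :=
          Finset.sum_congr rfl fun a _ => if_congr (by simp [hSdef]) rfl rfl
      _ = γ v * A := aux_sum_op nA pl (γ v) lam hlam1 hlamnA
  open Classical in
  have hFw : (∑ a : Act nA, if S w a then actProb nA pl (γ w) a else 0) = γ w * A := by
    calc (∑ a : Act nA, if S w a then actProb nA pl (γ w) a else 0)
        = ∑ a : Act nA, if P a then actProb nA pl (γ w) a else 0 :=
          Finset.sum_congr rfl fun a _ => if_congr (by simp [hSdef, Ne.symm hvw]) rfl rfl
      _ = γ w * A := aux_sum_op nA pl (γ w) lam hlam1 hlamnA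
  open Classical in
  have hFT : ∀ x, x ≠ v → x ≠ w → x ∈ U →
      (∑ a : Act nA, if S x a then actProb nA pl (γ x) a else 0) = 1 - γ x * A := by
    intro x hxv hxw hxU
    calc (∑ a : Act nA, if S x a then actProb nA pl (γ x) a else 0)
        = ∑ a : Act nA, if ¬ P a then actProb nA pl (γ x) a else 0 :=
          Finset.sum_congr rfl fun a _ => if_congr (by simp [hSdef, hxv, hxw, hxU]) rfl rfl
      _ = 1 - γ x * A := aux_sum_notop nA pl (γ x) lam hlam1 hlamnA
  open Classical in
  have hF1 : ∀ x, x ≠ v → x ≠ w → x ∉ U →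
      (∑ a : Act nA, if S x a then actProb nA pl (γ x) a else 0) = 1 := by
    intro x hxv hxw hxU
    calc (∑ a : Act nA, if S x a then actProb nA pl (γ x) a else 0)
        = ∑ a : Act nA, actProb nA pl (γ x) a :=
          Finset.sum_congr rfl fun a _ => by
            rw [if_pos]; simp [hSdef, hxv, hxw, hxU]
      _ = 1 := aux_total nA pl (γ x)
  set T : Finset V := (U.erase v).erase w with hT
  have hTmem : ∀ x ∈ T, x ≠ v ∧ x ≠ w ∧ x ∈ U := by
    intro x hx
    rw [hT] at hx
    have h1 := Finset.mem_erase.1 hx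
    have h2 := Finset.mem_erase.1 h1.2
    exact ⟨h2.1, h1.1, h2.2⟩
  open Classical in
  have hsplit : (∏ x, ∑ a : Act nA, if S x a then actProb nA pl (γ x) a else 0)
      = (γ v * A) * ((γ w * A) * ∏ x ∈ T, (1 - γ x * A)) := by
    rw [← Finset.mul_prod_erase univ _ (mem_univ v),
        ← Finset.mul_prod_erase (univ.erase v) _
          (Finset.mem_erase.2 ⟨Ne.symm hvw, mem_univ w⟩), hFv, hFw]
    congr 1
    congr 1
    have hTsub : T ⊆ (univ.erase v).erase w := by
      intro x hx
      obtain ⟨h1, h2, _⟩ := hTmem x hx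
      exact Finset.mem_erase.2 ⟨h2, Finset.mem_erase.2 ⟨h1, mem_univ x⟩⟩
    rw [← Finset.prod_subset hTsub (fun x hx hxT => ?_)]
    · exact Finset.prod_congr rfl fun x hx => by
        obtain ⟨h1, h2, h3⟩ := hTmem x hx
        exact hFT x h1 h2 h3
    · have hxw := (Finset.mem_erase.1 hx).1
      have hxv := (Finset.mem_erase.1 (Finset.mem_erase.1 hx).2).1
      have hxU : x ∉ U := by
        intro hU'
        exact hxT (by rw [hT]; exact Finset.mem_erase.2 ⟨hxw, Finset.mem_erase.2 ⟨hxv, hU'⟩⟩)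
      exact hF1 x hxv hxw hxU
  rw [hsplit]
  -- lower bounds
  have hsum_nonneg : (0:ℝ) ≤ ∑ x ∈ T, γ x := Finset.sum_nonneg fun x _ => (hγ x).1
  have hsumT : ∑ x ∈ T, γ x ≤ Gam G γ v + Gam G γ w := by
    have hTsub2 : T ⊆ insert v (G.neighborFinset v) ∪ insert w (G.neighborFinset w) := by
      intro x hx
      obtain ⟨_, _, hxU⟩ := hTmem x hx
      rcases Finset.mem_union.1 hxU with h | h
      · exact Finset.mem_union_left _ (Finset.mem_insert_of_mem h)
      · exact Finset.mem_union_right _ (Finset.mem_insert_of_mem h)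
    have h1 : ∑ x ∈ T, γ x
        ≤ ∑ x ∈ insert v (G.neighborFinset v) ∪ insert w (G.neighborFinset w), γ x :=
      Finset.sum_le_sum_of_subset_of_nonneg hTsub2 fun x _ _ => (hγ x).1
    have h2 := Finset.sum_union_inter (s₁ := insert v (G.neighborFinset v))
      (s₂ := insert w (G.neighborFinset w)) (f := γ)
    have h3 : (0:ℝ) ≤ ∑ x ∈ insert v (G.neighborFinset v) ∩ insert w (G.neighborFinset w), γ x :=
      Finset.sum_nonneg fun x _ => (hγ x).1
    have h4 : Gam G γ v = ∑ x ∈ insert v (G.neighborFinset v), γ x := rfl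
    have h5 : Gam G γ w = ∑ x ∈ insert w (G.neighborFinset w), γ x := rfl
    rw [h4, h5]; linarith
  have hexp_le : A * ∑ x ∈ T, γ x ≤ (Gam G γ v + Gam G γ w) / Γu := by
    have hGnn : (0:ℝ) ≤ Gam G γ v + Gam G γ w := by
      have : (0:ℝ) ≤ Gam G γ v := Finset.sum_nonneg fun x _ => (hγ x).1
      have : (0:ℝ) ≤ Gam G γ w := Finset.sum_nonneg fun x _ => (hγ x).1
      linarith [show (0:ℝ) ≤ Gam G γ v from Finset.sum_nonneg fun x _ => (hγ x).1]
    calc A * ∑ x ∈ T, γ x ≤ (1/Γu) * (Gam G γ v + Gam G γ w) :=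
          mul_le_mul hA_le hsumT hsum_nonneg (by positivity)
      _ = (Gam G γ v + Gam G γ w) / Γu := by ring
  have hPP : (4:ℝ) ^ (-((Gam G γ v + Gam G γ w) / Γu)) ≤ ∏ x ∈ T, (1 - γ x * A) := by
    have heach : ∀ x ∈ T, (4:ℝ)^(-(γ x * A)) ≤ 1 - γ x * A := fun x _ =>
      aux_rpow _ (mul_nonneg (hγ x).1 hA0.le)
        (by nlinarith [(hγ x).1, (hγ x).2, hA_half, hA0.le])
    have hsum_eq : ∑ x ∈ T, (γ x * A) = A * ∑ x ∈ T, γ x := by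
      rw [Finset.mul_sum]; exact Finset.sum_congr rfl fun x _ => mul_comm _ _
    have hprod_eq : ∏ x ∈ T, (4:ℝ)^(-(γ x * A)) = (4:ℝ)^(-(A * ∑ x ∈ T, γ x)) := by
      rw [Real.rpow_def_of_pos (by norm_num : (0:ℝ) < 4),
        Finset.prod_congr rfl fun x _ => Real.rpow_def_of_pos (by norm_num : (0:ℝ) < 4) _,
        ← Real.exp_sum]
      congr 1
      rw [← Finset.mul_sum]
      congr 1
      rw [← hsum_eq]
      exact Finset.sum_neg_distrib _
    have step1 : (4:ℝ)^(-(A * ∑ x ∈ T, γ x)) ≤ ∏ x ∈ T, (1 - γ x * A) := by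
      rw [← hprod_eq]
      exact Finset.prod_le_prod (fun x _ => Real.rpow_nonneg (by norm_num) _) heach
    have step2 : (4:ℝ)^(-((Gam G γ v + Gam G γ w) / Γu)) ≤ (4:ℝ)^(-(A * ∑ x ∈ T, γ x)) :=
      Real.rpow_le_rpow_of_exponent_le (by norm_num) (by linarith)
    linarith
  have hQ0 : (0:ℝ) ≤ (4:ℝ) ^ (-((Gam G γ v + Gam G γ w) / Γu)) :=
    Real.rpow_nonneg (by norm_num) _
  calc 1 / 4 * (4:ℝ) ^ (-((Gam G γ v + Gam G γ w) / Γu)) * γ v * γ w / Γu ^ 2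
      = (γ v * γ w) * ((1/(2*Γu))^2 * (4:ℝ) ^ (-((Gam G γ v + Gam G γ w) / Γu))) := by
        field_simp
        ring
    _ ≤ (γ v * γ w) * (A^2 * ∏ x ∈ T, (1 - γ x * A)) := by
        apply mul_le_mul_of_nonneg_left _ (mul_nonneg hγv0 hγw0)
        exact mul_le_mul (pow_le_pow_left₀ (by positivity) hA_ge 2) hPP hQ0 (by positivity)
    _ = γ v * A * (γ w * A * ∏ x ∈ T, (1 - γ x * A)) := by ring
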